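/- arXiv:1405.2575 — 2 statements merged into one kernel-verified Lean document; each statement's English description precedes it below -/
import Mathlib

section
/- Let γ ∈ (0,1] and let u : ℝ^d → ℝ^d be continuously differentiable with sup_x ‖Du(x)‖ < 1/3 and [Du]_γ = sup_{x≠x'} ‖Du(x) − Du(x')‖/|x−x'|^γ < ∞. Let ψ(x) = x + u(x), which is a C¹ diffeomorphism of ℝ^d. Then there exists a constant c₁ > 0, depending only on γ, such that ‖Dψ^{−1}(z) − Dψ^{−1}(z')‖ ≤ c₁ [Du]_γ |z − z'|^γ for all z, z' ∈ ℝ^d. -/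
noncomputable section

/-- The `γ`-Hölder seminorm `[f]_γ` (as the least admissible Hölder constant). -/
def holderSemi {E F : Type*} [NormedAddCommGroup E] [NormedAddCommGroup F]
    (γ : ℝ) (f : E → F) : ℝ :=
  sInf {C : ℝ | 0 ≤ C ∧ ∀ x y, ‖f x - f y‖ ≤ C * ‖x - y‖ ^ γ}

lemma holderSemi_spec {E F : Type*} [NormedAddCommGroup E] [NormedAddCommGroup F]
    {γ : ℝ} (hγ : 0 < γ) {f : E → F}
    (h : ∃ C, 0 ≤ C ∧ ∀ x y, ‖f x - f y‖ ≤ C * ‖x - y‖ ^ γ) :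
    0 ≤ holderSemi γ f ∧ ∀ x y, ‖f x - f y‖ ≤ holderSemi γ f * ‖x - y‖ ^ γ := by
  set S := {C : ℝ | 0 ≤ C ∧ ∀ x y, ‖f x - f y‖ ≤ C * ‖x - y‖ ^ γ} with hS
  obtain ⟨C, hC0, hCb⟩ := h
  have hne : S.Nonempty := ⟨C, hC0, hCb⟩
  have h0 : 0 ≤ holderSemi γ f := le_csInf hne fun C hC => hC.1
  refine ⟨h0, fun x y => ?_⟩
  rcases eq_or_ne x y with rfl | hxy
  · simp [Real.zero_rpow hγ.ne']
  · have hr : (0:ℝ) < ‖x - y‖ ^ γ := by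
      apply Real.rpow_pos_of_pos
      simpa [sub_eq_zero] using hxy
    rw [← div_le_iff₀ hr]
    exact le_csInf hne fun D hD => (div_le_iff₀ hr).2 (hD.2 x y)

/-- Hölder estimate for the derivative of the inverse of `ψ = id + u`:
`‖Dψ⁻¹(z) - Dψ⁻¹(z')‖ ≤ c₁ [Du]_γ |z - z'|^γ`, with `c₁` depending only on `γ`. -/
theorem inverse_derivative_holder
    (γ : ℝ) (hγ : 0 < γ ∧ γ ≤ 1) :
    ∃ c₁ : ℝ, 0 < c₁ ∧
      ∀ (d : ℕ), 1 ≤ d →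
        ∀ u : EuclideanSpace ℝ (Fin d) → EuclideanSpace ℝ (Fin d),
          ContDiff ℝ 1 u →
          (∃ c : ℝ, c < 1/3 ∧ ∀ x, ‖fderiv ℝ u x‖ ≤ c) →
          (∃ C, 0 ≤ C ∧ ∀ x y, ‖fderiv ℝ u x - fderiv ℝ u y‖ ≤ C * ‖x - y‖ ^ γ) →
          ∀ φ : EuclideanSpace ℝ (Fin d) → EuclideanSpace ℝ (Fin d),
            Function.LeftInverse φ (fun x => x + u x) →
            Function.RightInverse φ (fun x => x + u x) →
            ContDiff ℝ 1 φ →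
            ∀ z z', ‖fderiv ℝ φ z - fderiv ℝ φ z'‖ ≤
              c₁ * holderSemi γ (fun x => fderiv ℝ u x) * ‖z - z'‖ ^ γ := by
  refine ⟨4, by norm_num, fun d _ u hu ⟨c, hc3, hcb⟩ hHol φ hL hR hφ z z' => ?_⟩
  set ψ : EuclideanSpace ℝ (Fin d) → EuclideanSpace ℝ (Fin d) := fun x => x + u x with hψdef
  have hud : ∀ x, DifferentiableAt ℝ u x := fun x => (hu.differentiable one_ne_zero) x
  have hφd : ∀ x, DifferentiableAt ℝ φ x := fun x => (hφ.differentiable one_ne_zero) x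
  have hψd : ∀ x, DifferentiableAt ℝ ψ x := fun x => differentiableAt_fun_id.add (hud x)
  have hc0 : (0:ℝ) ≤ c := le_trans (norm_nonneg _) (hcb 0)
  -- derivative of ψ
  have hψderiv : ∀ x, fderiv ℝ ψ x
      = ContinuousLinearMap.id ℝ (EuclideanSpace ℝ (Fin d)) + fderiv ℝ u x := by
    intro x
    rw [hψdef]
    rw [fderiv_fun_add differentiableAt_fun_id (hud x), fderiv_fun_id]
  -- chain rule identities
  have hcomp1 : ∀ w, (fderiv ℝ ψ (φ w)).comp (fderiv ℝ φ w)
      = ContinuousLinearMap.id ℝ (EuclideanSpace ℝ (Fin d)) := by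
    intro w
    have h1 := fderiv_comp w (hψd (φ w)) (hφd w)
    have h2 : ψ ∘ φ = id := funext fun x => hR x
    rw [h2, fderiv_id] at h1
    exact h1.symm
  have hcomp2 : ∀ w, (fderiv ℝ φ w).comp (fderiv ℝ ψ (φ w))
      = ContinuousLinearMap.id ℝ (EuclideanSpace ℝ (Fin d)) := by
    intro w
    have h1 := fderiv_comp (φ w) (hφd (ψ (φ w))) (hψd (φ w))
    have h2 : φ ∘ ψ = id := funext fun x => hL x
    have hRw : ψ (φ w) = w := hR w
    rw [h2, fderiv_id, hRw] at h1
    exact h1.symm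
  -- bound on ‖fderiv φ‖
  have hAbound : ∀ w, ‖fderiv ℝ φ w‖ ≤ 3/2 := by
    intro w
    have h1 : fderiv ℝ φ w = ContinuousLinearMap.id ℝ (EuclideanSpace ℝ (Fin d))
        - (fderiv ℝ φ w).comp (fderiv ℝ u (φ w)) := by
      have h := hcomp2 w
      rw [hψderiv (φ w), ContinuousLinearMap.comp_add, ContinuousLinearMap.comp_id] at h
      rw [eq_sub_iff_add_eq]
      exact h
    have h2 : ‖fderiv ℝ φ w‖ ≤ 1 + c * ‖fderiv ℝ φ w‖ := by
      calc ‖fderiv ℝ φ w‖ = ‖ContinuousLinearMap.id ℝ (EuclideanSpace ℝ (Fin d))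
            - (fderiv ℝ φ w).comp (fderiv ℝ u (φ w))‖ := by rw [← h1]
        _ ≤ ‖ContinuousLinearMap.id ℝ (EuclideanSpace ℝ (Fin d))‖
            + ‖(fderiv ℝ φ w).comp (fderiv ℝ u (φ w))‖ := norm_sub_le _ _
        _ ≤ 1 + ‖fderiv ℝ φ w‖ * ‖fderiv ℝ u (φ w)‖ :=
            add_le_add ContinuousLinearMap.norm_id_le
              (ContinuousLinearMap.opNorm_comp_le _ _)
        _ ≤ 1 + c * ‖fderiv ℝ φ w‖ := by
            rw [mul_comm c]
            exact add_le_add_right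
              (mul_le_mul_of_nonneg_left (hcb (φ w)) (norm_nonneg _)) 1
    nlinarith [norm_nonneg (fderiv ℝ φ w)]
  -- u is c-Lipschitz
  have hulip : ∀ a b, ‖u a - u b‖ ≤ c * ‖a - b‖ := fun a b =>
    Convex.norm_image_sub_le_of_norm_fderiv_le (fun x _ => hud x)
      (fun x _ => hcb x) convex_univ (Set.mem_univ b) (Set.mem_univ a)
  -- φ is (3/2)-Lipschitz
  have hφlip : ∀ a b, ‖φ a - φ b‖ ≤ (3/2) * ‖a - b‖ := by
    intro a b
    have ha : φ a + u (φ a) = a := hR a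
    have hb : φ b + u (φ b) = b := hR b
    have key : φ a - φ b = (a - b) - (u (φ a) - u (φ b)) := by
      have hab : a - b = (φ a + u (φ a)) - (φ b + u (φ b)) := by rw [ha, hb]
      rw [hab]; abel
    have h1 : ‖φ a - φ b‖ ≤ ‖a - b‖ + c * ‖φ a - φ b‖ := by
      calc ‖φ a - φ b‖ = ‖(a - b) - (u (φ a) - u (φ b))‖ := by rw [key]
        _ ≤ ‖a - b‖ + ‖u (φ a) - u (φ b)‖ := norm_sub_le _ _
        _ ≤ ‖a - b‖ + c * ‖φ a - φ b‖ := add_le_add_right (hulip _ _) _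
    nlinarith [norm_nonneg (φ a - φ b), norm_nonneg (a - b)]
  -- Hölder seminorm facts
  obtain ⟨hH0, hHb⟩ :=
    holderSemi_spec (f := fun x : EuclideanSpace ℝ (Fin d) => fderiv ℝ u x) hγ.1 hHol
  set H := holderSemi γ (fun x : EuclideanSpace ℝ (Fin d) => fderiv ℝ u x) with hHdef
  set A := fderiv ℝ φ z with hA
  set A' := fderiv ℝ φ z' with hA'
  -- resolvent identity
  have hkey : A - A' = (A.comp (fderiv ℝ u (φ z') - fderiv ℝ u (φ z))).comp A' := by
    have e1 : A.comp (fderiv ℝ ψ (φ z))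
        = ContinuousLinearMap.id ℝ (EuclideanSpace ℝ (Fin d)) := hcomp2 z
    have e2 : (fderiv ℝ ψ (φ z')).comp A'
        = ContinuousLinearMap.id ℝ (EuclideanSpace ℝ (Fin d)) := hcomp1 z'
    have h5 : fderiv ℝ u (φ z') - fderiv ℝ u (φ z)
        = fderiv ℝ ψ (φ z') - fderiv ℝ ψ (φ z) := by
      rw [hψderiv, hψderiv]; abel
    rw [h5, ContinuousLinearMap.comp_sub, ContinuousLinearMap.sub_comp,
      ContinuousLinearMap.comp_assoc, e2, ContinuousLinearMap.comp_id, e1,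
      ContinuousLinearMap.id_comp]
  -- norm estimates
  have hDunn : (0:ℝ) ≤ H * ‖φ z' - φ z‖ ^ γ :=
    mul_nonneg hH0 (Real.rpow_nonneg (norm_nonneg _) _)
  have hstep1 : ‖A - A'‖ ≤ (3/2) * (H * ‖φ z' - φ z‖ ^ γ) * (3/2) := by
    rw [hkey]
    calc ‖(A.comp (fderiv ℝ u (φ z') - fderiv ℝ u (φ z))).comp A'‖
        ≤ ‖A.comp (fderiv ℝ u (φ z') - fderiv ℝ u (φ z))‖ * ‖A'‖ :=
          ContinuousLinearMap.opNorm_comp_le _ _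
      _ ≤ (‖A‖ * ‖fderiv ℝ u (φ z') - fderiv ℝ u (φ z)‖) * ‖A'‖ :=
          mul_le_mul_of_nonneg_right (ContinuousLinearMap.opNorm_comp_le _ _)
            (norm_nonneg _)
      _ ≤ ((3/2) * (H * ‖φ z' - φ z‖ ^ γ)) * (3/2) :=
          mul_le_mul
            (mul_le_mul (hAbound z) (hHb (φ z') (φ z)) (norm_nonneg _) (by norm_num))
            (hAbound z') (norm_nonneg _)
            (mul_nonneg (by norm_num) hDunn)
  have hstep2 : ‖φ z' - φ z‖ ^ γ ≤ (3/2) * ‖z - z'‖ ^ γ := by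
    calc ‖φ z' - φ z‖ ^ γ ≤ ((3/2) * ‖z' - z‖) ^ γ :=
          Real.rpow_le_rpow (norm_nonneg _) (hφlip z' z) (le_of_lt hγ.1)
      _ = (3/2 : ℝ) ^ γ * ‖z' - z‖ ^ γ := Real.mul_rpow (by norm_num) (norm_nonneg _)
      _ ≤ (3/2) * ‖z - z'‖ ^ γ := by
          rw [norm_sub_rev z' z]
          have h32 : (3/2 : ℝ) ^ γ ≤ 3/2 := by
            calc (3/2 : ℝ) ^ γ ≤ (3/2 : ℝ) ^ (1:ℝ) :=
                  Real.rpow_le_rpow_of_exponent_le (by norm_num) hγ.2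
              _ = 3/2 := Real.rpow_one _
          exact mul_le_mul_of_nonneg_right h32 (Real.rpow_nonneg (norm_nonneg _) _)
  have hrnn : (0:ℝ) ≤ ‖z - z'‖ ^ γ := Real.rpow_nonneg (norm_nonneg _) _
  show ‖A - A'‖ ≤ 4 * H * ‖z - z'‖ ^ γ
  calc ‖A - A'‖ ≤ (3/2) * (H * ‖φ z' - φ z‖ ^ γ) * (3/2) := hstep1
    _ ≤ (3/2) * (H * ((3/2) * ‖z - z'‖ ^ γ)) * (3/2) := by
        apply mul_le_mul_of_nonneg_right _ (by norm_num)
        exact mul_le_mul_of_nonneg_left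
          (mul_le_mul_of_nonneg_left hstep2 hH0) (by norm_num)
    _ = (27/8) * H * ‖z - z'‖ ^ γ := by ring
    _ ≤ 4 * H * ‖z - z'‖ ^ γ := by nlinarith [mul_nonneg hH0 hrnn]
end
end

section
/- Let γ ∈ (0,1] and let u : ℝ^d → ℝ^d be continuously differentiable with sup_x ‖Du(x)‖ < 1/3 and [Du]_γ < ∞; let ψ(x) = x + u(x), a C¹ diffeomorphism of ℝ^d with inverse ψ^{−1}. Let ν be a Borel measure on ℝ^d with ∫_{{|z| ≤ 1}} |z|^{2γ} ν(dz) < ∞. Define g(y,z) = u(ψ^{−1}(y) + z) + z − u(ψ^{−1}(y)) for y, z ∈ ℝ^d. Then there exists a constant c > 0, depending only on γ, [Du]_γ and ∫_{{|z|≤1}} |z|^{2γ} ν(dz), such that ∫_{{|z| ≤ 1}} |g(y,z) − g(y',z)|² ν(dz) ≤ c |y − y'|² for all y, y' ∈ ℝ^d. -/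
open MeasureTheory
open scoped ENNReal

noncomputable section

section Aux

variable {d : ℕ}

/-- MVT Lipschitz bound for a C¹ map with bounded derivative. -/
lemma aux_lip (u : EuclideanSpace ℝ (Fin d) → EuclideanSpace ℝ (Fin d))
    (hu : ContDiff ℝ 1 u) {c : ℝ} (hc : ∀ x, ‖fderiv ℝ u x‖ ≤ c)
    (a b : EuclideanSpace ℝ (Fin d)) : ‖u a - u b‖ ≤ c * ‖a - b‖ := by
  have := Convex.norm_image_sub_le_of_norm_hasFDerivWithin_le
    (f := u) (f' := fun x => fderiv ℝ u x) (s := Set.univ) (C := c)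
    (fun x _ => ((hu.differentiable one_ne_zero x).hasFDerivAt).hasFDerivWithinAt)
    (fun x _ => hc x) convex_univ (Set.mem_univ b) (Set.mem_univ a)
  simpa using this

/-- Hölder estimate on the increment difference. -/
lemma aux_incr (u : EuclideanSpace ℝ (Fin d) → EuclideanSpace ℝ (Fin d))
    (hu : ContDiff ℝ 1 u) {C γ : ℝ}
    (hC : ∀ x y, ‖fderiv ℝ u x - fderiv ℝ u y‖ ≤ C * ‖x - y‖ ^ γ)
    (a b z : EuclideanSpace ℝ (Fin d)) :
    ‖(u (a + z) - u a) - (u (b + z) - u b)‖ ≤ (C * ‖z‖ ^ γ) * ‖a - b‖ := by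
  have hder : ∀ x : EuclideanSpace ℝ (Fin d),
      HasFDerivAt (fun x => u (x + z) - u x)
        (fderiv ℝ u (x + z) - fderiv ℝ u x) x := by
    intro x
    have h1 : HasFDerivAt (fun x => u (x + z)) (fderiv ℝ u (x + z)) x := by
      have h := ((hu.differentiable one_ne_zero) (x + z)).hasFDerivAt
      simpa [Function.comp_def] using h.comp x ((hasFDerivAt_id x).add_const z)
    exact h1.sub ((hu.differentiable one_ne_zero) x).hasFDerivAt
  have := Convex.norm_image_sub_le_of_norm_hasFDerivWithin_le
    (f := fun x => u (x + z) - u x)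
    (f' := fun x => fderiv ℝ u (x + z) - fderiv ℝ u x) (s := Set.univ)
    (C := C * ‖z‖ ^ γ)
    (fun x _ => (hder x).hasFDerivWithinAt)
    (fun x _ => by have h := hC (x + z) x; rwa [add_sub_cancel_left] at h)
    convex_univ (Set.mem_univ b) (Set.mem_univ a)
  simpa using this

end Aux

/-- Lipschitz estimate for the jump coefficient
`g(y,z) = u(ψ⁻¹(y)+z) + z - u(ψ⁻¹(y))` of the auxiliary SDE:
`∫_{|z|≤1} |g(y,z) - g(y',z)|² ν(dz) ≤ c |y - y'|²`. -/
theorem jump_coefficient_lipschitz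
    (d : ℕ) (hd : 1 ≤ d) (γ : ℝ) (hγ : 0 < γ ∧ γ ≤ 1)
    (u : EuclideanSpace ℝ (Fin d) → EuclideanSpace ℝ (Fin d))
    (hu : ContDiff ℝ 1 u)
    (hDu : ∃ c : ℝ, c < 1/3 ∧ ∀ x, ‖fderiv ℝ u x‖ ≤ c)
    (hDuH : ∃ C, 0 ≤ C ∧ ∀ x y, ‖fderiv ℝ u x - fderiv ℝ u y‖ ≤ C * ‖x - y‖ ^ γ)
    (φ : EuclideanSpace ℝ (Fin d) → EuclideanSpace ℝ (Fin d))
    (hφl : Function.LeftInverse φ (fun x => x + u x))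
    (hφr : Function.RightInverse φ (fun x => x + u x))
    (hφC : ContDiff ℝ 1 φ)
    (ν : Measure (EuclideanSpace ℝ (Fin d)))
    (hmom : (∫⁻ z in {z : EuclideanSpace ℝ (Fin d) | ‖z‖ ≤ 1},
      ENNReal.ofReal (‖z‖ ^ (2 * γ)) ∂ν) < ⊤) :
    ∃ c : ℝ, 0 < c ∧
      ∀ y y' : EuclideanSpace ℝ (Fin d),
        (∫⁻ z in {z : EuclideanSpace ℝ (Fin d) | ‖z‖ ≤ 1},
          ENNReal.ofReal (‖(u (φ y + z) + z - u (φ y)) -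
            (u (φ y' + z) + z - u (φ y'))‖ ^ 2) ∂ν) ≤
          ENNReal.ofReal (c * ‖y - y'‖ ^ 2) := by
  obtain ⟨c₀, hc₀, hDu⟩ := hDu
  obtain ⟨C, hC0, hC⟩ := hDuH
  set M : ℝ := (∫⁻ z in {z : EuclideanSpace ℝ (Fin d) | ‖z‖ ≤ 1},
      ENNReal.ofReal (‖z‖ ^ (2 * γ)) ∂ν).toReal with hM
  have hM0 : 0 ≤ M := ENNReal.toReal_nonneg
  set K : ℝ := (9/4) * C ^ 2 with hK
  have hK0 : 0 ≤ K := by positivity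
  refine ⟨K * M + 1, by positivity, fun y y' => ?_⟩
  -- Lipschitz bound for φ
  have hφlip : ‖φ y - φ y'‖ ≤ (3/2) * ‖y - y'‖ := by
    set a := φ y; set b := φ y'
    have ha : a + u a = y := hφr y
    have hb : b + u b = y' := hφr y'
    have hab : a - b = (y - y') - (u a - u b) := by
      rw [← ha, ← hb]; abel
    have h1 : ‖a - b‖ ≤ ‖y - y'‖ + ‖u a - u b‖ := by
      rw [hab]; exact norm_sub_le _ _
    have h2 : ‖u a - u b‖ ≤ c₀ * ‖a - b‖ := aux_lip u hu hDu a b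
    have h3 : 0 ≤ ‖a - b‖ := norm_nonneg _
    nlinarith [norm_nonneg (y - y')]
  -- pointwise bound
  have hpt : ∀ z : EuclideanSpace ℝ (Fin d),
      ‖(u (φ y + z) + z - u (φ y)) - (u (φ y' + z) + z - u (φ y'))‖ ^ 2
        ≤ (K * ‖y - y'‖ ^ 2) * ‖z‖ ^ (2 * γ) := by
    intro z
    have heq : (u (φ y + z) + z - u (φ y)) - (u (φ y' + z) + z - u (φ y'))
        = (u (φ y + z) - u (φ y)) - (u (φ y' + z) - u (φ y')) := by abel
    have h1 : ‖(u (φ y + z) + z - u (φ y)) - (u (φ y' + z) + z - u (φ y'))‖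
        ≤ (C * ‖z‖ ^ γ) * ((3/2) * ‖y - y'‖) := by
      rw [heq]
      calc ‖(u (φ y + z) - u (φ y)) - (u (φ y' + z) - u (φ y'))‖
          ≤ (C * ‖z‖ ^ γ) * ‖φ y - φ y'‖ := aux_incr u hu hC _ _ z
        _ ≤ (C * ‖z‖ ^ γ) * ((3/2) * ‖y - y'‖) := by
            have : 0 ≤ C * ‖z‖ ^ γ := by positivity
            exact mul_le_mul_of_nonneg_left hφlip this
    have hz : ‖z‖ ^ (2 * γ) = (‖z‖ ^ γ) ^ 2 := by
      rw [mul_comm, Real.rpow_mul (norm_nonneg z), Real.rpow_two]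
    have h2 := pow_le_pow_left₀ (norm_nonneg _) h1 2
    calc ‖(u (φ y + z) + z - u (φ y)) - (u (φ y' + z) + z - u (φ y'))‖ ^ 2
        ≤ ((C * ‖z‖ ^ γ) * ((3/2) * ‖y - y'‖)) ^ 2 := h2
      _ = (K * ‖y - y'‖ ^ 2) * ‖z‖ ^ (2 * γ) := by rw [hz, hK]; ring
  -- integral bound
  have hA : (0:ℝ) ≤ K * ‖y - y'‖ ^ 2 := by positivity
  calc (∫⁻ z in {z : EuclideanSpace ℝ (Fin d) | ‖z‖ ≤ 1},
        ENNReal.ofReal (‖(u (φ y + z) + z - u (φ y)) -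
          (u (φ y' + z) + z - u (φ y'))‖ ^ 2) ∂ν)
      ≤ ∫⁻ z in {z : EuclideanSpace ℝ (Fin d) | ‖z‖ ≤ 1},
          ENNReal.ofReal ((K * ‖y - y'‖ ^ 2) * ‖z‖ ^ (2 * γ)) ∂ν :=
        lintegral_mono fun z => ENNReal.ofReal_le_ofReal (hpt z)
    _ = ENNReal.ofReal (K * ‖y - y'‖ ^ 2) *
          ∫⁻ z in {z : EuclideanSpace ℝ (Fin d) | ‖z‖ ≤ 1},
            ENNReal.ofReal (‖z‖ ^ (2 * γ)) ∂ν := by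
        simp_rw [ENNReal.ofReal_mul hA]
        exact lintegral_const_mul' _ _ ENNReal.ofReal_ne_top
    _ = ENNReal.ofReal (K * ‖y - y'‖ ^ 2) * ENNReal.ofReal M := by
        rw [hM, ENNReal.ofReal_toReal hmom.ne]
    _ = ENNReal.ofReal ((K * ‖y - y'‖ ^ 2) * M) := (ENNReal.ofReal_mul hA).symm
    _ ≤ ENNReal.ofReal ((K * M + 1) * ‖y - y'‖ ^ 2) := by
        apply ENNReal.ofReal_le_ofReal
        nlinarith [sq_nonneg ‖y - y'‖]
end
end
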